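/- Let L be a nondegenerate integral lattice (free abelian group of finite positive rank with a nondegenerate integral symmetric bilinear form) of discriminant d, and let G be a finite group acting on L preserving the bilinear form. If the fixed sublattice L^G is nonzero, then the restriction of the form to L^G is nondegenerate, so L^G is a lattice, and its discriminant divides (d·|G|)^r where r is the rank of L^G. -/

import Mathlib

/-- The discriminant (Gram determinant) of a bilinear form on a finite free module,
computed with respect to a choice of basis. -/
noncomputable def gramDet (R : Type) (S : Type) {M : Type} [CommRing R] [AddCommGroup M]
    [Module R M] [Module.Free R M] [Module.Finite R M] [CommRing S] (B : M → M → S) : S :=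
  letI := Classical.decEq (Module.Free.ChooseBasisIndex R M)
  Matrix.det (Matrix.of fun i j => B (Module.Free.chooseBasis R M i) (Module.Free.chooseBasis R M j))

/-- The submodule of elements fixed by a group action given by linear automorphisms. -/
def fixedSubmodule {R M G : Type} [CommRing R] [AddCommGroup M] [Module R M] [Group G]
    (ρ : G →* (M ≃ₗ[R] M)) : Submodule R M where
  carrier := {x | ∀ g : G, ρ g x = x}
  zero_mem' := by intro g; simp
  add_mem' := by intro a b ha hb g; simp [ha g, hb g]
  smul_mem' := by intro c x hx g; simp [hx g]

/-- Auxiliary: "adjugate trick": any linear functional, multiplied by the Gram determinant,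
is represented by a vector via the bilinear form. -/
lemma exists_B_eq_det_mul {L : Type} [AddCommGroup L]
    {ι : Type} [Fintype ι] [DecidableEq ι] (b : Module.Basis ι ℤ L)
    (B : L →ₗ[ℤ] L →ₗ[ℤ] ℤ) (f : L →ₗ[ℤ] ℤ) :
    ∃ y : L, ∀ z : L, B y z = (Matrix.of fun i j => B (b i) (b j)).det * f z := by
  set A : Matrix ι ι ℤ := Matrix.of fun i j => B (b i) (b j) with hA
  set v : ι → ℤ := fun k => f (b k) with hv
  set w : ι → ℤ := A.transpose.adjugate.mulVec v with hw
  have h3 : A.transpose.mulVec w = A.det • v := by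
    rw [hw, Matrix.mulVec_mulVec, Matrix.mul_adjugate, Matrix.det_transpose,
      Matrix.smul_mulVec, Matrix.one_mulVec]
  have key : B (∑ k, w k • b k) = A.det • f := by
    apply b.ext
    intro j
    have h1 : B (∑ k, w k • b k) (b j) = ∑ k, w k * A k j := by
      rw [map_sum, LinearMap.sum_apply]
      simp [hA, smul_eq_mul]
    have h2 : ∑ k, w k * A k j = (A.transpose.mulVec w) j := by
      simp [Matrix.mulVec, dotProduct, Matrix.transpose_apply, mul_comm]
    rw [h1, h2, h3]
    simp [hv, mul_comm]
  exact ⟨∑ k, w k • b k, fun z => by rw [key]; simp [mul_comm]⟩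

/-- Auxiliary: a saturated submodule of a finitely generated module over a PID
admits a linear projection. -/
lemma exists_projection {R L : Type} [CommRing R] [IsDomain R] [IsPrincipalIdealRing R]
    [AddCommGroup L] [Module R L] [Module.Finite R L]
    (M : Submodule R L) (htf : ∀ (c : R) (x : L), c ≠ 0 → c • x ∈ M → x ∈ M) :
    ∃ p : L →ₗ[R] M, ∀ m : M, p (m : L) = m := by
  haveI : Module.Finite R (L ⧸ M) := Module.Finite.quotient R M
  haveI : NoZeroSMulDivisors R (L ⧸ M) := by
    refine ⟨fun {c x} h => ?_⟩
    by_cases hc : c = 0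
    · exact Or.inl hc
    · right
      obtain ⟨z, rfl⟩ := Submodule.Quotient.mk_surjective M x
      rw [← Submodule.Quotient.mk_smul, Submodule.Quotient.mk_eq_zero] at h
      rw [Submodule.Quotient.mk_eq_zero]
      exact htf c z hc h
  haveI : Module.Free R (L ⧸ M) := Module.free_of_finite_type_torsion_free'
  obtain ⟨σ, hσ⟩ := Module.projective_lifting_property M.mkQ LinearMap.id
    (Submodule.Quotient.mk_surjective M)
  have hmem : ∀ x : L, x - σ (M.mkQ x) ∈ M := by
    intro x
    rw [← Submodule.Quotient.mk_eq_zero]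
    have h := LinearMap.congr_fun hσ (M.mkQ x)
    simp only [LinearMap.coe_comp, Function.comp_apply, LinearMap.id_apply] at h
    show M.mkQ (x - σ (M.mkQ x)) = 0
    rw [map_sub, h, sub_self]
  refine ⟨LinearMap.codRestrict M (LinearMap.id - σ.comp M.mkQ) hmem, fun m => ?_⟩
  apply Subtype.ext
  show (m : L) - σ (M.mkQ (m : L)) = (m : L)
  have : M.mkQ (m : L) = 0 := (Submodule.Quotient.mk_eq_zero M).mpr m.2
  rw [this, map_zero, sub_zero]

/-- Auxiliary: the main computation, phrased with explicit bases. -/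
lemma key_lemma {L : Type} [AddCommGroup L] [Module.Finite ℤ L]
    [NoZeroSMulDivisors ℤ L]
    {ι κ : Type} [Fintype ι] [DecidableEq ι] [Fintype κ] [DecidableEq κ]
    (b : Module.Basis ι ℤ L) (B : L →ₗ[ℤ] L →ₗ[ℤ] ℤ)
    (d : ℤ) (hd : d = (Matrix.of fun i j => B (b i) (b j)).det) (hd0 : d ≠ 0)
    (G : Type) [Group G] [Fintype G]
    (ρ : G →* (L ≃ₗ[ℤ] L)) (hρ : ∀ (g : G) (x y : L), B (ρ g x) (ρ g y) = B x y)
    (e : Module.Basis κ ℤ (fixedSubmodule ρ)) :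
    (Matrix.of fun i j => B (e i) (e j)).det ≠ 0 ∧
    (Matrix.of fun i j => B (e i) (e j)).det ∣
      (d * (Fintype.card G : ℤ)) ^ (Fintype.card κ) := by
  set A : Matrix κ κ ℤ := Matrix.of fun i j => B (e i) (e j) with hA
  obtain ⟨p, hp⟩ := exists_projection (fixedSubmodule ρ) (fun c x hc hcx => by
    intro g
    have h1 : ρ g (c • x) = c • x := hcx g
    rw [map_smul] at h1
    exact smul_right_injective L hc h1)
  have main : ∀ i : κ, ∃ m : fixedSubmodule ρ, ∀ k : κ,
      B m (e k) = (d * (Fintype.card G : ℤ)) * (if i = k then 1 else 0) := by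
    intro i
    obtain ⟨y, hy⟩ := exists_B_eq_det_mul b B ((e.coord i).comp p)
    rw [← hd] at hy
    have hmem : (∑ g : G, ρ g y) ∈ fixedSubmodule ρ := by
      intro h
      rw [map_sum]
      have h1 : ∀ g : G, ρ h (ρ g y) = ρ (h * g) y := fun g => by rw [map_mul]; rfl
      calc ∑ g : G, ρ h (ρ g y) = ∑ g : G, ρ ((Equiv.mulLeft h) g) y := by
            simp only [h1]; rfl
        _ = ∑ g : G, ρ g y := Equiv.sum_comp (Equiv.mulLeft h) (fun g => ρ g y)
    refine ⟨⟨∑ g : G, ρ g y, hmem⟩, fun k => ?_⟩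
    show B (∑ g : G, ρ g y) (e k : L) = _
    rw [map_sum, LinearMap.sum_apply]
    have hterm : ∀ g : G, B (ρ g y) ((e k : L)) = d * ((e.coord i) (p (e k : L))) := by
      intro g
      have h1 : ρ g (e k : L) = (e k : L) := (e k).2 g
      calc B (ρ g y) (e k : L) = B (ρ g y) (ρ g (e k : L)) := by rw [h1]
        _ = B y (e k : L) := hρ g y (e k)
        _ = d * _ := hy _
    rw [Finset.sum_congr rfl (fun g _ => hterm g), Finset.sum_const, Finset.card_univ]
    rw [hp (e k)]
    have hco : e.coord i (e k) = if i = k then 1 else 0 := by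
      rw [Module.Basis.coord_apply, Module.Basis.repr_self]
      simp [Finsupp.single_apply, eq_comm]
    rw [hco]
    simp only [nsmul_eq_mul]
    ring
  choose m hm using main
  set C : Matrix κ κ ℤ := Matrix.of fun i j => e.repr (m i) j with hC
  have hCA : C * A = (d * (Fintype.card G : ℤ)) • (1 : Matrix κ κ ℤ) := by
    ext i k
    have expand : ((m i : L)) = ∑ j, e.repr (m i) j • (e j : L) := by
      calc ((m i : L)) = ((∑ j, e.repr (m i) j • e j : fixedSubmodule ρ) : L) := by
            rw [e.sum_repr]
        _ = ∑ j, e.repr (m i) j • (e j : L) := by push_cast; rfl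
    calc (C * A) i k = ∑ j, e.repr (m i) j * B (e j) (e k) := by
          simp [Matrix.mul_apply, hC, hA]
      _ = B ((m i : L)) (e k : L) := by
          rw [expand, map_sum, LinearMap.sum_apply]
          simp [smul_eq_mul]
      _ = (d * (Fintype.card G : ℤ)) * (if i = k then 1 else 0) := hm i k
      _ = ((d * (Fintype.card G : ℤ)) • (1 : Matrix κ κ ℤ)) i k := by
          simp [Matrix.smul_apply, Matrix.one_apply]
  have hdet : C.det * A.det = (d * (Fintype.card G : ℤ)) ^ Fintype.card κ := by
    rw [← Matrix.det_mul, hCA, Matrix.det_smul, Matrix.det_one, mul_one]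
  have hne : (d * (Fintype.card G : ℤ)) ^ Fintype.card κ ≠ 0 :=
    pow_ne_zero _ (mul_ne_zero hd0 (Int.natCast_ne_zero.mpr Fintype.card_ne_zero))
  constructor
  · intro h0
    rw [h0, mul_zero] at hdet
    exact hne hdet.symm
  · exact ⟨C.det, by rw [← hdet]; ring⟩

/-- if `L` is a nondegenerate integral lattice of discriminant `d` and `G` is a
finite group acting on `L` preserving the form, with `L^G ≠ 0`, then the restriction of the
form to `L^G` is nondegenerate (so `L^G` is a lattice) and its discriminant divides
`(d·|G|)^r`, where `r = rk(L^G)`. -/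
theorem stmt0 (L : Type) [AddCommGroup L] [Module.Free ℤ L] [Module.Finite ℤ L]
    (hrank : 0 < Module.finrank ℤ L)
    (B : L →ₗ[ℤ] L →ₗ[ℤ] ℤ) (hsymm : ∀ x y, B x y = B y x)
    (d : ℤ) (hd : d = gramDet ℤ ℤ (fun x y => B x y)) (hd0 : d ≠ 0)
    (G : Type) [Group G] [Fintype G]
    (ρ : G →* (L ≃ₗ[ℤ] L)) (hρ : ∀ (g : G) (x y : L), B (ρ g x) (ρ g y) = B x y)
    (hfix : fixedSubmodule ρ ≠ ⊥) :
    gramDet ℤ ℤ (fun x y : fixedSubmodule ρ => B x y) ≠ 0 ∧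
    gramDet ℤ ℤ (fun x y : fixedSubmodule ρ => B x y) ∣
      (d * (Fintype.card G : ℤ)) ^ (Module.finrank ℤ (fixedSubmodule ρ)) := by
  letI : DecidableEq (Module.Free.ChooseBasisIndex ℤ L) := Classical.decEq _
  letI : DecidableEq (Module.Free.ChooseBasisIndex ℤ (fixedSubmodule ρ)) := Classical.decEq _
  haveI : NoZeroSMulDivisors ℤ L := Function.Injective.noZeroSMulDivisors _
    (Module.Free.chooseBasis ℤ L).equivFun.injective (map_zero _) (fun c x => map_smul _ c x)
  have h := key_lemma (Module.Free.chooseBasis ℤ L) B d hd hd0 G ρ hρ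
    (Module.Free.chooseBasis ℤ (fixedSubmodule ρ))
  rw [Module.finrank_eq_card_chooseBasisIndex ℤ (fixedSubmodule ρ)]
  exact h
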